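/- For r = s = 1, the number c(n) of compositions of n with parts in A = {1} ∪ {2p : p ≥ 1} = {1, 2, 4, 6, 8, ...} satisfies the recurrence c(n) = c(n-1) + 2c(n-2) - c(n-3) for n ≥ 3, with c(0) = 1, c(1) = 1, c(2) = 2. -/
import Mathlib

namespace CompEvensAux

def P (x : ℕ) : Prop := x = 1 ∨ ∃ p : ℕ, 1 ≤ p ∧ x = 2 * p

def S (n : ℕ) : Set (List ℕ) := {l | l.sum = n ∧ ∀ x ∈ l, P x}

def B (n : ℕ) : Set (List ℕ) :=
  {l | l ∈ S n ∧ ∃ p t, 1 ≤ p ∧ l = (2 * p) :: t}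

lemma P_pos {x : ℕ} (h : P x) : 0 < x := by
  rcases h with h | ⟨p, hp, h⟩ <;> omega

lemma S_finite (n : ℕ) : (S n).Finite := by
  have : Finite (S n) := by
    apply Finite.of_injective
      (fun l => (⟨l.1, fun hi => P_pos (l.2.2 _ hi), l.2.1⟩ : Composition n))
    intro a b hab
    simpa [Subtype.ext_iff, Composition.ext_iff] using hab
  exact Set.toFinite _

lemma B_subset (n : ℕ) : B n ⊆ S n := fun _ h => h.1

lemma B_finite (n : ℕ) : (B n).Finite := (S_finite n).subset (B_subset n)

lemma split1 {n : ℕ} (hn : 1 ≤ n) :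
    S n = ((fun t => 1 :: t) '' S (n - 1)) ∪ B n := by
  ext l
  constructor
  · rintro ⟨hsum, hmem⟩
    cases l with
    | nil => simp at hsum; omega
    | cons x t =>
      rcases hmem x (by simp) with rfl | ⟨p, hp, rfl⟩
      · left
        refine ⟨t, ⟨?_, fun y hy => hmem y (by simp [hy])⟩, rfl⟩
        simp at hsum; omega
      · right
        exact ⟨⟨hsum, hmem⟩, p, t, hp, rfl⟩
  · rintro (⟨t, ⟨hsum, hmem⟩, rfl⟩ | hB)
    · refine ⟨?_, ?_⟩
      · simp [hsum]; omega
      · intro x hx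
        rcases List.mem_cons.mp hx with rfl | hx
        · exact Or.inl rfl
        · exact hmem x hx
    · exact hB.1

def g (l : List ℕ) : List ℕ := (l.headI + 2) :: l.tail

lemma split2 {n : ℕ} (hn : 2 ≤ n) :
    B n = ((fun t => 2 :: t) '' S (n - 2)) ∪ (g '' B (n - 2)) := by
  ext l
  constructor
  · rintro ⟨⟨hsum, hmem⟩, p, t, hp, rfl⟩
    have hsum' : 2 * p + t.sum = n := by simpa using hsum
    rcases Nat.eq_or_lt_of_le hp with hp1 | hp2
    · left
      refine ⟨t, ⟨by omega, fun y hy => hmem y (by simp [hy])⟩, ?_⟩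
      simp [← hp1]
    · right
      refine ⟨(2 * (p - 1)) :: t, ⟨⟨?_, ?_⟩, p - 1, t, by omega, rfl⟩, ?_⟩
      · simp; omega
      · intro y hy
        rcases List.mem_cons.mp hy with rfl | hy
        · exact Or.inr ⟨p - 1, by omega, rfl⟩
        · exact hmem y (by simp [hy])
      · show (2 * (p - 1) + 2) :: t = 2 * p :: t
        congr 1
        omega
  · rintro (⟨t, ⟨hsum, hmem⟩, rfl⟩ | ⟨m, ⟨⟨hsum, hmem⟩, p, t, hp, rfl⟩, rfl⟩)
    · refine ⟨⟨?_, ?_⟩, 1, t, le_refl 1, by norm_num⟩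
      · simp [hsum]; omega
      · intro y hy
        rcases List.mem_cons.mp hy with rfl | hy
        · exact Or.inr ⟨1, le_refl 1, rfl⟩
        · exact hmem y hy
    · have hsum' : 2 * p + t.sum = n - 2 := by simpa using hsum
      show ((2 * p :: t).headI + 2) :: (2 * p :: t).tail ∈ B n
      simp only [List.headI, List.tail]
      refine ⟨⟨?_, ?_⟩, p + 1, t, by omega, by ring_nf⟩
      · simp; omega
      · intro y hy
        rcases List.mem_cons.mp hy with rfl | hy
        · exact Or.inr ⟨p + 1, by omega, by ring⟩
        · exact hmem y (by simp [hy])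

lemma card1 {n : ℕ} (hn : 1 ≤ n) :
    (S n).ncard = (S (n - 1)).ncard + (B n).ncard := by
  have hdisj : Disjoint ((fun t => 1 :: t) '' S (n - 1)) (B n) := by
    rw [Set.disjoint_left]
    rintro l ⟨t, _, rfl⟩ ⟨_, p, t', hp, heq⟩
    have : (1 : ℕ) = 2 * p := by
      have := List.head_eq_of_cons_eq heq.symm
      omega
    omega
  have hinj : Function.Injective (fun t : List ℕ => 1 :: t) := by
    intro a b hab
    injection hab
  rw [split1 hn, Set.ncard_union_eq hdisj ((S_finite (n - 1)).image _) (B_finite n),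
    Set.ncard_image_of_injective _ hinj]

lemma card2 {n : ℕ} (hn : 2 ≤ n) :
    (B n).ncard = (S (n - 2)).ncard + (B (n - 2)).ncard := by
  have hdisj : Disjoint ((fun t => 2 :: t) '' S (n - 2)) (g '' B (n - 2)) := by
    rw [Set.disjoint_left]
    rintro l ⟨t, _, rfl⟩ ⟨m, ⟨_, p, t', hp, rfl⟩, heq⟩
    simp only [g, List.headI, List.tail] at heq
    have := List.head_eq_of_cons_eq heq.symm
    omega
  have hinj : Function.Injective (fun t : List ℕ => 2 :: t) := by
    intro a b hab
    injection hab
  have hinjOn : Set.InjOn g (B (n - 2)) := by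
    rintro a ⟨⟨_, _⟩, p, t, hp, rfl⟩ b ⟨⟨_, _⟩, q, s, hq, rfl⟩ hab
    simp only [g, List.headI, List.tail] at hab
    have h1 := List.head_eq_of_cons_eq hab
    have h2 := List.tail_eq_of_cons_eq hab
    have : p = q := by omega
    rw [this, h2]
  rw [split2 hn, Set.ncard_union_eq hdisj ((S_finite (n - 2)).image _)
      ((B_finite (n - 2)).image _),
    Set.ncard_image_of_injective _ hinj, Set.ncard_image_of_injOn hinjOn]

lemma S0 : S 0 = {([] : List ℕ)} := by
  ext l
  constructor
  · rintro ⟨hsum, hmem⟩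
    cases l with
    | nil => rfl
    | cons x t =>
      have := P_pos (hmem x (by simp))
      simp at hsum
      omega
  · rintro rfl
    exact ⟨rfl, by simp⟩

lemma B_small {n : ℕ} (hn : n ≤ 1) : B n = ∅ := by
  ext l
  simp only [Set.mem_empty_iff_false, iff_false]
  rintro ⟨⟨hsum, _⟩, p, t, hp, rfl⟩
  simp at hsum
  omega

end CompEvensAux

theorem compositions_one_evens_recurrence
    (c : ℕ → ℕ)
    (hc : ∀ n, c n = Nat.card {l : List ℕ | l.sum = n ∧
      ∀ x ∈ l, x = 1 ∨ ∃ p : ℕ, 1 ≤ p ∧ x = 2 * p}) :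
    c 0 = 1 ∧ c 1 = 1 ∧ c 2 = 2 ∧
    ∀ n, 3 ≤ n → (c n : ℤ) = c (n - 1) + 2 * c (n - 2) - c (n - 3) := by
  open CompEvensAux in
  have hc' : ∀ n, c n = (S n).ncard := by
    intro n
    rw [hc n]
    exact Nat.card_coe_set_eq _
  have hc0 : c 0 = 1 := by
    rw [hc' 0, S0, Set.ncard_singleton]
  have hc1 : c 1 = 1 := by
    rw [hc' 1, card1 (le_refl 1), ← hc' 0, hc0, B_small (le_refl 1), Set.ncard_empty]
  have hc2 : c 2 = 2 := by
    rw [hc' 2, card1 (by norm_num : (1:ℕ) ≤ 2), card2 (le_refl 2),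
      B_small (by norm_num : (0:ℕ) ≤ 1), Set.ncard_empty, ← hc' 1, ← hc' 0, hc0, hc1]
  refine ⟨hc0, hc1, hc2, ?_⟩
  intro n hn
  have e1 : c n = c (n - 1) + (B n).ncard := by
    rw [hc' n, card1 (by omega), ← hc' (n - 1)]
  have e2 : (B n).ncard = c (n - 2) + (B (n - 2)).ncard := by
    rw [card2 (by omega), ← hc' (n - 2)]
  have e3 : c (n - 2) = c (n - 3) + (B (n - 2)).ncard := by
    have h12 : n - 2 - 1 = n - 3 := by omega
    rw [hc' (n - 2), card1 (by omega : 1 ≤ n - 2), h12, ← hc' (n - 3)]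
  omega
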